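/- Let G be a k-regular graph on n vertices whose adjacency matrix belongs to a symmetric association scheme, with smallest adjacency eigenvalue λ_min < k. Then the fractional cut-cover number satisfies fcc(G) ≥ 2k/(k − λ_min). -/

import Mathlib

open Matrix

lemma rayleigh_min {V : Type*} [Fintype V] [DecidableEq V] [Nonempty V]
    {A : Matrix V V ℝ} (hA : A.IsHermitian) (x : V → ℝ) :
    (⨅ i, hA.eigenvalues i) * (x ⬝ᵥ x) ≤ x ⬝ᵥ (A *ᵥ x) := by
  have hspec := hA.spectral_theorem
  set U : Matrix V V ℝ := (Matrix.IsHermitian.eigenvectorUnitary hA : Matrix V V ℝ) with hUdef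
  set y : V → ℝ := (star U) *ᵥ x with hy
  have hUU : U * star U = 1 := hA.eigenvectorUnitary.prop.2
  have hysU : y = x ᵥ* U := by
    rw [hy, Matrix.star_eq_conjTranspose, Matrix.conjTranspose_eq_transpose_of_trivial,
      mulVec_transpose]
  have h1 : x ⬝ᵥ (A *ᵥ x) = ∑ i, hA.eigenvalues i * (y i)^2 := by
    conv_lhs => rw [hspec, Unitary.conjStarAlgAut_apply]
    rw [← mulVec_mulVec, ← mulVec_mulVec, dotProduct_mulVec, ← hysU, ← hy]
    simp only [dotProduct, mulVec_diagonal]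
    refine Finset.sum_congr rfl fun i _ => ?_
    simp [Function.comp]
    ring
  have h2 : x ⬝ᵥ x = ∑ i, (y i)^2 := by
    have : x ⬝ᵥ x = x ⬝ᵥ ((U * star U) *ᵥ x) := by rw [hUU]; simp
    rw [this, ← mulVec_mulVec, dotProduct_mulVec, ← hysU, ← hy]
    simp [dotProduct, sq]
  rw [h1, h2, Finset.mul_sum]
  apply Finset.sum_le_sum
  intro i _
  have : (⨅ i, hA.eigenvalues i) ≤ hA.eigenvalues i :=
    ciInf_le (Set.Finite.bddBelow (Set.finite_range _)) i
  nlinarith [sq_nonneg (y i)]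



/-- Let `G` be a `k`-regular graph on `n` vertices whose adjacency matrix belongs to a
symmetric association scheme, with smallest adjacency eigenvalue `λ_min < k`. Then the
fractional cut-cover number
`fcc(G) = min {Σ_S y S : y ≥ 0, Σ_S y S · 1_{δ(S)} ≥ 1 entrywise on edges}`
satisfies `fcc(G) ≥ 2 k / (k - λ_min)`. -/
theorem fcc_ge_of_association_scheme
    {V : Type*} [Fintype V] [DecidableEq V] (d : ℕ)
    (A E : Fin (d + 1) → Matrix V V ℝ)
    (P Q : Matrix (Fin (d + 1)) (Fin (d + 1)) ℝ)
    (hA0 : A 0 = 1)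
    (hAsym : ∀ i, (A i)ᵀ = A i)
    (hA01 : ∀ i u v, A i u v = 0 ∨ A i u v = 1)
    (hAsum : ∀ u v, ∑ i, A i u v = 1)
    (hAne : ∀ i, A i ≠ 0)
    (hAmul : ∀ i j, A i * A j ∈ Submodule.span ℝ (Set.range A))
    (hAcomm : ∀ i j, A i * A j = A j * A i)
    (hE0 : E 0 = (Fintype.card V : ℝ)⁻¹ • Matrix.of (fun _ _ => (1 : ℝ)))
    (hEsym : ∀ i, (E i)ᵀ = E i)
    (hEmul : ∀ i j, E i * E j = if i = j then E i else 0)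
    (hEsum : ∑ i, E i = 1)
    (hEne : ∀ i, E i ≠ 0)
    (hP : ∀ i, A i = ∑ l, P l i • E l)
    (hQ : ∀ i, E i = (Fintype.card V : ℝ)⁻¹ • ∑ l, Q l i • A l)
    [Nonempty V]
    (G : SimpleGraph V) [DecidableRel G.Adj]
    (k : ℕ) (hreg : G.IsRegularOfDegree k)
    (i₁ : Fin (d + 1)) (hi₁ : G.adjMatrix ℝ = A i₁)
    (hherm : (G.adjMatrix ℝ).IsHermitian)
    (hlam : (⨅ i, hherm.eigenvalues i) < k) :
    2 * (k : ℝ) / ((k : ℝ) - ⨅ i, hherm.eigenvalues i) ≤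
      sInf {t : ℝ | ∃ y : Finset V → ℝ, (∀ S, 0 ≤ y S) ∧
        (∀ u v, G.Adj u v →
          1 ≤ ∑ S : Finset V, if Xor (u ∈ S) (v ∈ S) then y S else 0) ∧
        t = ∑ S : Finset V, y S} := by
  set lam := ⨅ i, hherm.eigenvalues i with hlamdef
  set n : ℝ := (Fintype.card V : ℝ) with hn
  have hnpos : 0 < n := by positivity -- card pos since Nonempty
  have hkl : 0 < (k : ℝ) - lam := by linarith
  -- indicator vector
  set xs : Finset V → V → ℝ := fun S u => if u ∈ S then 1 else -1 with hxs
  -- cut count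
  set cS : Finset V → ℝ :=
    fun S => ∑ u, ∑ v, if G.Adj u v ∧ Xor (u ∈ S) (v ∈ S) then (1:ℝ) else 0 with hcS
  -- row sums of adjacency matrix
  have hrow : ∀ u, ∑ v, G.adjMatrix ℝ u v = (k : ℝ) := by
    intro u
    simp only [SimpleGraph.adjMatrix_apply]
    rw [Finset.sum_boole]
    have hcard : (Finset.univ.filter fun v => G.Adj u v).card = k := by
      rw [← hreg u, ← G.card_neighborFinset_eq_degree, SimpleGraph.neighborFinset_eq_filter]
    exact_mod_cast congrArg (Nat.cast : ℕ → ℝ) hcard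
  have hxsnorm : ∀ S, xs S ⬝ᵥ xs S = n := by
    intro S
    simp only [dotProduct, hxs]
    rw [show (∑ x : V, (if x ∈ S then (1:ℝ) else -1) * if x ∈ S then 1 else -1)
        = ∑ _x : V, (1:ℝ) from Finset.sum_congr rfl fun u _ => by
          by_cases h : u ∈ S <;> simp [h]]
    simp [hn]
  -- bound on cut count
  have hcut : ∀ S, cS S ≤ n * ((k : ℝ) - lam) / 2 := by
    intro S
    have hray := rayleigh_min hherm (xs S)
    rw [hxsnorm S] at hray
    have hdot : xs S ⬝ᵥ (G.adjMatrix ℝ *ᵥ xs S)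
        = ∑ u, ∑ v, G.adjMatrix ℝ u v * (xs S u * xs S v) := by
      simp only [dotProduct, mulVec, Finset.mul_sum]
      refine Finset.sum_congr rfl fun u _ => Finset.sum_congr rfl fun v _ => by ring
    have hexp : cS S = (n * k - xs S ⬝ᵥ (G.adjMatrix ℝ *ᵥ xs S)) / 2 := by
      rw [hdot, hcS]
      have : ∀ u v, (if G.Adj u v ∧ Xor (u ∈ S) (v ∈ S) then (1:ℝ) else 0)
          = (G.adjMatrix ℝ u v - G.adjMatrix ℝ u v * (xs S u * xs S v)) / 2 := by
        intro u v
        simp only [SimpleGraph.adjMatrix_apply, hxs]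
        by_cases h : G.Adj u v <;> by_cases hu : u ∈ S <;> by_cases hv : v ∈ S <;>
          simp [h, hu, hv, Xor] <;> ring
      simp only [this]
      have h2 : (2:ℝ) ≠ 0 := two_ne_zero
      rw [eq_div_iff h2]
      simp only [Finset.sum_mul, div_mul_cancel₀ _ h2, Finset.sum_sub_distrib]
      congr 1
      simp only [hrow, Finset.sum_const, Finset.card_univ, nsmul_eq_mul, hn]
    rw [hexp]
    rw [← hlamdef] at hray
    nlinarith [hray]
  -- main bound
  apply le_csInf
  · refine ⟨∑ S : Finset V, (1:ℝ), fun _ => 1, fun _ => zero_le_one, ?_, rfl⟩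
    intro u v huv
    have hne : u ≠ v := G.ne_of_adj huv
    have : (if Xor (u ∈ ({u} : Finset V)) (v ∈ ({u} : Finset V)) then (1:ℝ) else 0)
        ≤ ∑ S : Finset V, if Xor (u ∈ S) (v ∈ S) then (1:ℝ) else 0 := by
      apply Finset.single_le_sum (f := fun S : Finset V =>
        if Xor (u ∈ S) (v ∈ S) then (1:ℝ) else 0)
      · intro S _
        split <;> norm_num
      · exact Finset.mem_univ _
    simpa [Xor, hne, Ne.symm hne] using this
  · rintro t ⟨y, hy0, hyc, rfl⟩
    -- n * k ≤ ∑ S, y S * cS S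
    have key : n * k ≤ ∑ S : Finset V, y S * cS S := by
      have step1 : ∀ u v, G.adjMatrix ℝ u v
          ≤ ∑ S : Finset V, if G.Adj u v ∧ Xor (u ∈ S) (v ∈ S) then y S else 0 := by
        intro u v
        by_cases h : G.Adj u v
        · have heq : (∑ S : Finset V, if G.Adj u v ∧ Xor (u ∈ S) (v ∈ S) then y S else 0)
              = ∑ S : Finset V, if Xor (u ∈ S) (v ∈ S) then y S else 0 :=
            Finset.sum_congr rfl fun S _ => by simp [h]
          rw [heq]
          simp only [SimpleGraph.adjMatrix_apply, if_pos h]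
          exact hyc u v h
        · simp only [SimpleGraph.adjMatrix_apply, h, if_false]
          apply Finset.sum_nonneg
          intro S _
          split
          · exact hy0 S
          · exact le_rfl
      calc n * k = ∑ u, ∑ v, G.adjMatrix ℝ u v := by
            simp only [hrow, Finset.sum_const, Finset.card_univ, nsmul_eq_mul, hn]
        _ ≤ ∑ u, ∑ v, ∑ S : Finset V,
              (if G.Adj u v ∧ Xor (u ∈ S) (v ∈ S) then y S else 0) :=
            Finset.sum_le_sum fun u _ => Finset.sum_le_sum fun v _ => step1 u v
        _ = ∑ S : Finset V, ∑ u, ∑ v,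
              (if G.Adj u v ∧ Xor (u ∈ S) (v ∈ S) then y S else 0) :=
            Eq.trans (Finset.sum_congr rfl fun u _ => Finset.sum_comm) Finset.sum_comm
        _ = ∑ S : Finset V, y S * cS S := by
            refine Finset.sum_congr rfl fun S _ => ?_
            simp only [hcS, Finset.mul_sum, mul_ite, mul_one, mul_zero]
    -- combine
    have hsum_le : ∑ S : Finset V, y S * cS S
        ≤ (∑ S : Finset V, y S) * (n * ((k:ℝ) - lam) / 2) := by
      rw [Finset.sum_mul]
      exact Finset.sum_le_sum fun S _ =>
        mul_le_mul_of_nonneg_left (hcut S) (hy0 S)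
    have hfinal : n * k ≤ (∑ S : Finset V, y S) * (n * ((k:ℝ) - lam) / 2) :=
      le_trans key hsum_le
    rw [div_le_iff₀ hkl]
    have hT : 0 ≤ ∑ S : Finset V, y S := Finset.sum_nonneg fun S _ => hy0 S
    nlinarith [hfinal, hnpos]
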